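/- arXiv:2305.09505 — 2 statements merged into one kernel-verified Lean document; each statement's English description precedes it below -/
import Mathlib

section
/- For α, α̃ ∈ L¹(X,ℝ) and any σ ∈ ℂ, |E^X_{α̃}(σ) − E^X_α(σ)| ≤ β_σ ‖α̃ − α‖₁ e^{max(‖α‖₁, ‖α̃‖₁)}, where β_σ = 1 if Im σ ≥ 0 and β_σ = e^{2|Im σ|(x₁−x₀)} otherwise. -/
open MeasureTheory Filter

/-- The alternating exponent term κ(s₁,…,s_j). -/
noncomputable def kappaFn (x0 : ℝ) (j : ℕ) (s : Fin j → ℝ) : ℝ :=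
  (∑ ν : Fin j, (-1 : ℝ) ^ (j - 1 - (ν : ℕ)) * s ν) - (if Odd j then x0 else 0)

/-- The ordered simplex {x₀ < s₁ < ⋯ < s_j < x₁}. -/
def simplexSet (x0 x1 : ℝ) (j : ℕ) : Set (Fin j → ℝ) :=
  {s | StrictMono s ∧ ∀ ν, s ν ∈ Set.Ioo x0 x1}

/-- The j-th term C_j(σ) of the harmonic exponential series. -/
noncomputable def Cterm (x0 x1 : ℝ) (α : ℝ → ℝ) (j : ℕ) (σ : ℂ) : ℂ :=
  ∫ s in simplexSet x0 x1 j,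
    Complex.exp (2 * Complex.I * σ * (kappaFn x0 j s : ℂ)) * ∏ ν : Fin j, (α (s ν) : ℂ)

/-- The harmonic exponential E^X_α(σ). -/
noncomputable def hexp (x0 x1 : ℝ) (α : ℝ → ℝ) (σ : ℂ) : ℂ :=
  1 + ∑' j : ℕ, Cterm x0 x1 α (j + 1) σ

/-- The L¹ norm of α on (x₀,x₁). -/
noncomputable def L1normOn (x0 x1 : ℝ) (α : ℝ → ℝ) : ℝ :=
  ∫ x in Set.Ioo x0 x1, |α x|

/-- β_σ = 1 if Im σ ≥ 0, else e^{2|Im σ|(x₁−x₀)}. -/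
noncomputable def betaSigma (x0 x1 : ℝ) (σ : ℂ) : ℝ :=
  if 0 ≤ σ.im then 1 else Real.exp (2 * |σ.im| * (x1 - x0))


section HexpAux
open Finset


/-- Telescoping bound for difference of products. -/
lemma abs_prod_sub_prod {ι : Type*} [LinearOrder ι] (t : Finset ι) (b c : ι → ℝ) :
    |∏ x ∈ t, b x - ∏ x ∈ t, c x| ≤
      ∑ x ∈ t, (∏ y ∈ t.filter (· < x), |c y|) * (|b x - c x| *
        ∏ y ∈ t.filter (x < ·), |b y|) := by
  classical
  induction t using Finset.induction_on_max with
  | empty => simp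
  | insert a s ha ih =>
    have hanotin : a ∉ s := fun h => lt_irrefl a (ha a h)
    rw [Finset.prod_insert hanotin, Finset.prod_insert hanotin, Finset.sum_insert hanotin]
    have key : b a * ∏ x ∈ s, b x - c a * ∏ x ∈ s, c x
        = (∏ x ∈ s, b x - ∏ x ∈ s, c x) * b a + (∏ x ∈ s, c x) * (b a - c a) := by ring
    rw [key]
    have h1 : |(∏ x ∈ s, b x - ∏ x ∈ s, c x) * b a + (∏ x ∈ s, c x) * (b a - c a)|
        ≤ |∏ x ∈ s, b x - ∏ x ∈ s, c x| * |b a| + (∏ x ∈ s, |c x|) * |b a - c a| := by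
      calc _ ≤ |(∏ x ∈ s, b x - ∏ x ∈ s, c x) * b a| + |(∏ x ∈ s, c x) * (b a - c a)| :=
            abs_add_le _ _
        _ = _ := by rw [abs_mul, abs_mul, Finset.abs_prod]
    refine h1.trans ?_
    -- identify filters
    have hfa1 : (insert a s).filter (· < a) = s := by
      rw [Finset.filter_insert, if_neg (lt_irrefl a)]
      exact Finset.filter_true_of_mem fun x hx => ha x hx
    have hfa2 : (insert a s).filter (a < ·) = ∅ := by
      rw [Finset.filter_insert, if_neg (lt_irrefl a)]
      refine Finset.filter_false_of_mem fun x hx => ?_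
      exact asymm (ha x hx)
    have hterm_a : (∏ y ∈ (insert a s).filter (· < a), |c y|) * (|b a - c a| *
        ∏ y ∈ (insert a s).filter (a < ·), |b y|) = (∏ x ∈ s, |c x|) * |b a - c a| := by
      rw [hfa1, hfa2]; simp [mul_comm]
    rw [hterm_a]
    have hsum : ∑ x ∈ s, (∏ y ∈ (insert a s).filter (· < x), |c y|) * (|b x - c x| *
          ∏ y ∈ (insert a s).filter (x < ·), |b y|)
        = ∑ x ∈ s, ((∏ y ∈ s.filter (· < x), |c y|) * (|b x - c x| *
          ∏ y ∈ s.filter (x < ·), |b y|)) * |b a| := by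
      refine Finset.sum_congr rfl fun x hx => ?_
      have h1 : (insert a s).filter (· < x) = s.filter (· < x) := by
        rw [Finset.filter_insert, if_neg (asymm (ha x hx))]
      have h2 : (insert a s).filter (x < ·) = insert a (s.filter (x < ·)) := by
        rw [Finset.filter_insert, if_pos (ha x hx)]
      have hanotin2 : a ∉ s.filter (x < ·) := fun h => hanotin (Finset.mem_of_mem_filter a h)
      rw [h1, h2, Finset.prod_insert hanotin2]; ring
    rw [hsum, ← Finset.sum_mul, add_comm]
    gcongr



lemma kappaFn_succ (x0 : ℝ) (j : ℕ) (s : Fin (j+1) → ℝ) :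
    kappaFn x0 (j+1) s = (s (Fin.last j) - x0) - kappaFn x0 j (s ∘ Fin.castSucc) := by
  unfold kappaFn
  rw [Fin.sum_univ_castSucc]
  have hsum : ∀ i : Fin j, (-1 : ℝ) ^ (j + 1 - 1 - ((i.castSucc : Fin (j+1)) : ℕ)) * s i.castSucc
      = -((-1 : ℝ) ^ (j - 1 - (i : ℕ)) * (s ∘ Fin.castSucc) i) := by
    intro i
    have hi : (i : ℕ) < j := i.isLt
    have : j + 1 - 1 - (i : ℕ) = (j - 1 - (i : ℕ)) + 1 := by omega
    rw [Fin.coe_castSucc, this, pow_succ]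
    simp only [Function.comp_apply]; ring
  rw [Finset.sum_congr rfl fun i _ => hsum i, Finset.sum_neg_distrib]
  have hlast : (-1 : ℝ) ^ (j + 1 - 1 - ((Fin.last j : Fin (j+1)) : ℕ)) = 1 := by
    simp [Fin.val_last]
  rw [hlast, one_mul]
  rcases Nat.even_or_odd j with hj | hj
  · have h1 : ¬ Odd j := Nat.not_odd_iff_even.mpr hj
    have h2 : Odd (j + 1) := Even.add_one hj
    rw [if_pos h2, if_neg h1]; ring
  · have h2 : ¬ Odd (j + 1) := by
      rw [Nat.odd_add_one, not_not]; exact hj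
    rw [if_pos hj, if_neg h2]; ring

lemma kappaFn_bounds (x0 : ℝ) : ∀ (j : ℕ) (s : Fin j → ℝ), StrictMono s → (∀ ν, x0 < s ν) →
    0 ≤ kappaFn x0 j s ∧ ∀ b, x0 ≤ b → (∀ ν, s ν ≤ b) → kappaFn x0 j s ≤ b - x0 := by
  intro j
  induction j with
  | zero =>
    intro s _ _
    have h0 : kappaFn x0 0 s = 0 := by simp [kappaFn]
    constructor
    · rw [h0]
    · intro b hb _; rw [h0]; linarith
  | succ j ih =>
    intro s hs hpos
    have hmono : StrictMono (s ∘ Fin.castSucc) := hs.comp (Fin.strictMono_castSucc)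
    have hpos' : ∀ ν : Fin j, x0 < (s ∘ Fin.castSucc) ν := fun ν => hpos _
    obtain ⟨h0, hub⟩ := ih (s ∘ Fin.castSucc) hmono hpos'
    have hle : ∀ ν : Fin j, (s ∘ Fin.castSucc) ν ≤ s (Fin.last j) := by
      intro ν
      exact (hs (Fin.castSucc_lt_last ν)).le
    have hlastpos : x0 ≤ s (Fin.last j) := (hpos _).le
    have hk : kappaFn x0 j (s ∘ Fin.castSucc) ≤ s (Fin.last j) - x0 :=
      hub _ hlastpos hle
    rw [kappaFn_succ]
    refine ⟨by linarith, fun b hb hble => ?_⟩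
    have := hble (Fin.last j)
    linarith

lemma measurableSet_simplexSet (x0 x1 : ℝ) (n : ℕ) : MeasurableSet (simplexSet x0 x1 n) := by
  have : simplexSet x0 x1 n =
      (⋂ (i : Fin n) (j : Fin n) (_ : i < j), {s : Fin n → ℝ | s i < s j}) ∩
      (⋂ ν : Fin n, (fun s : Fin n → ℝ => s ν) ⁻¹' Set.Ioo x0 x1) := by
    ext s
    simp only [simplexSet, Set.mem_setOf_eq, Set.mem_inter_iff, Set.mem_iInter,
      Set.mem_preimage]
    constructor
    · rintro ⟨h1, h2⟩; exact ⟨fun i j hij => h1 hij, h2⟩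
    · rintro ⟨h1, h2⟩; exact ⟨fun i j hij => h1 i j hij, h2⟩
  rw [this]
  refine MeasurableSet.inter ?_ ?_
  · exact MeasurableSet.iInter fun i => MeasurableSet.iInter fun j => MeasurableSet.iInter
      fun _ => measurableSet_lt (measurable_pi_apply i) (measurable_pi_apply j)
  · exact MeasurableSet.iInter fun ν => (measurable_pi_apply ν) measurableSet_Ioo

lemma perm_unique {n : ℕ} {s : Fin n → ℝ} {π π' : Equiv.Perm (Fin n)}
    (h : StrictMono (s ∘ π)) (h' : StrictMono (s ∘ π')) : π = π' := by
  have hr : Set.range (s ∘ π) = Set.range (s ∘ π') := by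
    rw [Set.range_comp, Set.range_comp, π.surjective.range_eq, π'.surjective.range_eq]
  have heq : s ∘ π = s ∘ π' := (StrictMono.range_inj h h').mp hr
  have hsi : Function.Injective s := by
    have : Function.Injective (s ∘ π) := h.injective
    intro a b hab
    have := this.eq_iff.mp (show (s ∘ π) (π.symm a) = (s ∘ π) (π.symm b) by
      simp [Function.comp, Equiv.apply_symm_apply, hab])
    simpa using congrArg π this
  exact Equiv.ext fun i => hsi (congrFun heq i)

lemma betaSigma_pos (x0 x1 : ℝ) (σ : ℂ) : 0 < betaSigma x0 x1 σ := by
  unfold betaSigma; split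
  · norm_num
  · positivity

lemma norm_exp_kappa_le {x0 x1 : ℝ} (hx : x0 < x1) (σ : ℂ) {n : ℕ} {s : Fin n → ℝ}
    (hs : s ∈ simplexSet x0 x1 n) :
    ‖Complex.exp (2 * Complex.I * σ * (kappaFn x0 n s : ℂ))‖ ≤ betaSigma x0 x1 σ := by
  obtain ⟨hmono, hmem⟩ := hs
  obtain ⟨h0, hub⟩ := kappaFn_bounds x0 n s hmono (fun ν => (hmem ν).1)
  have hk1 : kappaFn x0 n s ≤ x1 - x0 := hub x1 hx.le (fun ν => (hmem ν).2.le)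
  set κ := kappaFn x0 n s
  have hre : (2 * Complex.I * σ * (κ : ℂ)).re = -2 * σ.im * κ := by
    simp [Complex.mul_re, Complex.mul_im] <;> ring
  rw [Complex.norm_exp, hre]
  unfold betaSigma
  split
  · rename_i him
    have h1 : -2 * σ.im * κ ≤ 0 := by nlinarith
    calc Real.exp (-2 * σ.im * κ) ≤ Real.exp 0 := Real.exp_le_exp.mpr h1
      _ = 1 := Real.exp_zero
  · rename_i him
    push_neg at him
    have habs : |σ.im| = -σ.im := abs_of_neg him
    apply Real.exp_le_exp.mpr
    rw [habs]; nlinarith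

lemma prod_split {n : ℕ} (x : Fin n) (h : Fin n → ℝ) :
    ∏ y, h y = (∏ y ∈ univ.filter (· < x), h y) * (h x * ∏ y ∈ univ.filter (x < ·), h y) := by
  classical
  have h1 : univ.filter (fun y : Fin n => ¬ y < x) = insert x (univ.filter (x < ·)) := by
    ext z
    simp only [Finset.mem_filter, Finset.mem_univ, true_and, not_lt, Finset.mem_insert]
    constructor
    · intro hzx
      rcases lt_or_eq_of_le hzx with h | h
      · exact Or.inr h
      · exact Or.inl h.symm
    · rintro (rfl | h)
      · exact le_refl _
      · exact h.le
  rw [← Finset.prod_filter_mul_prod_filter_not univ (· < x), h1,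
    Finset.prod_insert (by simp)]

lemma card_split {n : ℕ} (x : Fin n) :
    (univ.filter (· < x)).card + (univ.filter (x < ·)).card + 1 = n := by
  classical
  have h0 := Finset.card_filter_add_card_filter_not (s := (univ : Finset (Fin n)))
    (fun y : Fin n => y < x)
  have h1 : univ.filter (fun y : Fin n => ¬ y < x) = insert x (univ.filter (x < ·)) := by
    ext z
    simp only [Finset.mem_filter, Finset.mem_univ, true_and, not_lt, Finset.mem_insert]
    constructor
    · intro hzx
      rcases lt_or_eq_of_le hzx with h | h
      · exact Or.inr h
      · exact Or.inl h.symm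
    · rintro (rfl | h)
      · exact le_refl _
      · exact h.le
  rw [h1, Finset.card_insert_of_notMem (by simp)] at h0
  simpa [Finset.card_univ, add_assoc] using h0

lemma factorial_mul_setIntegral_simplex_le {x0 x1 : ℝ} (n : ℕ) {Φ : (Fin n → ℝ) → ℝ}
    (hΦ : Integrable Φ) (hnn : ∀ s, 0 ≤ Φ s)
    (hsym : ∀ (π : Equiv.Perm (Fin n)) (s : Fin n → ℝ), Φ (s ∘ π) = Φ s) :
    (n.factorial : ℝ) * ∫ s in simplexSet x0 x1 n, Φ s ≤ ∫ s, Φ s := by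
  classical
  set A : Equiv.Perm (Fin n) → Set (Fin n → ℝ) :=
    fun π => {s | (s ∘ π) ∈ simplexSet x0 x1 n} with hA
  have hT : ∀ π : Equiv.Perm (Fin n),
      ∃ T : (Fin n → ℝ) ≃ᵐ (Fin n → ℝ), (∀ s, T s = s ∘ π) ∧
        MeasurePreserving T volume volume := by
    intro π
    refine ⟨MeasurableEquiv.piCongrLeft (fun _ => ℝ) π.symm, fun s => ?_, ?_⟩
    · funext j
      have h := Equiv.piCongrLeft_apply_apply (fun _ : Fin n => ℝ) π.symm s (π j)
      simp only [Equiv.symm_apply_apply] at h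
      simpa [MeasurableEquiv.coe_piCongrLeft] using h
    · exact volume_measurePreserving_piCongrLeft (fun _ => ℝ) π.symm
  have hAmeas : ∀ π, MeasurableSet (A π) := by
    intro π
    obtain ⟨T, hTs, _⟩ := hT π
    have : A π = ⇑T ⁻¹' simplexSet x0 x1 n := by
      ext s; simp [hA, Set.mem_preimage, hTs]
    rw [this]
    exact T.measurable (measurableSet_simplexSet x0 x1 n)
  have hAint : ∀ π, ∫ s in A π, Φ s = ∫ s in simplexSet x0 x1 n, Φ s := by
    intro π
    obtain ⟨T, hTs, hTmp⟩ := hT π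
    have hpre : A π = ⇑T ⁻¹' simplexSet x0 x1 n := by
      ext s; simp [hA, Set.mem_preimage, hTs]
    have hfun : Φ = (fun x => Φ (T x)) := funext fun x => by rw [hTs]; exact (hsym π x).symm
    calc ∫ s in A π, Φ s = ∫ x in ⇑T ⁻¹' simplexSet x0 x1 n, Φ (T x) := by
          rw [hpre, ← hfun]
      _ = ∫ s in simplexSet x0 x1 n, Φ s :=
          hTmp.setIntegral_preimage_emb T.measurableEmbedding Φ _
  have hdisj : ((Finset.univ : Finset (Equiv.Perm (Fin n))) : Set (Equiv.Perm (Fin n))).Pairwise (Function.onFun Disjoint A) := by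
    intro π _ π' _ hne
    refine Set.disjoint_left.mpr fun s hs hs' => hne ?_
    exact perm_unique hs.1 hs'.1
  have hsum : ∫ s in ⋃ π ∈ (Finset.univ : Finset (Equiv.Perm (Fin n))), A π, Φ s
      = ∑ π : Equiv.Perm (Fin n), ∫ s in A π, Φ s :=
    integral_biUnion_finset Finset.univ (fun π _ => hAmeas π) hdisj
      (fun π _ => hΦ.integrableOn)
  have hconst : ∑ π : Equiv.Perm (Fin n), ∫ s in A π, Φ s
      = (n.factorial : ℝ) * ∫ s in simplexSet x0 x1 n, Φ s := by
    rw [Finset.sum_congr rfl fun π _ => hAint π, Finset.sum_const, Finset.card_univ,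
      Fintype.card_perm, Fintype.card_fin, nsmul_eq_mul]
  calc (n.factorial : ℝ) * ∫ s in simplexSet x0 x1 n, Φ s
      = ∫ s in ⋃ π ∈ (Finset.univ : Finset (Equiv.Perm (Fin n))), A π, Φ s := by
        rw [hsum, hconst]
    _ ≤ ∫ s, Φ s := setIntegral_le_integral hΦ (Filter.Eventually.of_forall hnn)

lemma measurable_kappaFn (x0 : ℝ) (n : ℕ) : Measurable (kappaFn x0 n) := by
  unfold kappaFn
  exact (Finset.measurable_sum _ fun ν _ =>
    (measurable_pi_apply ν).const_mul _).sub measurable_const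

lemma measurable_integrand {x0 : ℝ} (σ : ℂ) (n : ℕ) {h : ℝ → ℝ} (hm : Measurable h) :
    Measurable (fun s : Fin n → ℝ =>
      Complex.exp (2 * Complex.I * σ * (kappaFn x0 n s : ℂ)) * ∏ ν : Fin n, (h (s ν) : ℂ)) := by
  refine Measurable.mul ?_ ?_
  · exact Complex.continuous_exp.measurable.comp
      ((Complex.measurable_ofReal.comp (measurable_kappaFn x0 n)).const_mul _)
  · exact Finset.measurable_prod _ fun ν _ =>
      Complex.measurable_ofReal.comp (hm.comp (measurable_pi_apply ν))

lemma indicator_abs_eq {x0 x1 : ℝ} (h : ℝ → ℝ) :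
    (fun t => |(Set.Ioo x0 x1).indicator h t|) = (Set.Ioo x0 x1).indicator (fun t => |h t|) := by
  funext t
  by_cases ht : t ∈ Set.Ioo x0 x1 <;> simp [Set.indicator_apply, ht]

lemma integral_abs_indicator {x0 x1 : ℝ} (h : ℝ → ℝ) :
    ∫ t, |(Set.Ioo x0 x1).indicator h t| = L1normOn x0 x1 h := by
  rw [indicator_abs_eq, integral_indicator measurableSet_Ioo, L1normOn]

lemma norm_integrand_le {x0 x1 : ℝ} (hx : x0 < x1) (σ : ℂ) (n : ℕ) (h : ℝ → ℝ)
    {s : Fin n → ℝ} (hs : s ∈ simplexSet x0 x1 n) :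
    ‖Complex.exp (2 * Complex.I * σ * (kappaFn x0 n s : ℂ)) * ∏ ν : Fin n, (h (s ν) : ℂ)‖ ≤
      betaSigma x0 x1 σ * ∏ ν : Fin n, |(Set.Ioo x0 x1).indicator h (s ν)| := by
  rw [norm_mul, norm_prod]
  have hprod : ∀ ν : Fin n, ‖(h (s ν) : ℂ)‖ = |(Set.Ioo x0 x1).indicator h (s ν)| := by
    intro ν
    rw [Set.indicator_of_mem (hs.2 ν), Complex.norm_real, Real.norm_eq_abs]
  rw [Finset.prod_congr rfl fun ν _ => hprod ν]
  exact mul_le_mul_of_nonneg_right (norm_exp_kappa_le hx σ hs)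
    (Finset.prod_nonneg fun ν _ => abs_nonneg _)

lemma integrand_integrableOn {x0 x1 : ℝ} (hx : x0 < x1) (σ : ℂ) (n : ℕ) {h : ℝ → ℝ}
    (hm : Measurable h) (hint : IntegrableOn h (Set.Ioo x0 x1)) :
    IntegrableOn (fun s : Fin n → ℝ =>
      Complex.exp (2 * Complex.I * σ * (kappaFn x0 n s : ℂ)) * ∏ ν : Fin n, (h (s ν) : ℂ))
      (simplexSet x0 x1 n) := by
  have hHi : Integrable ((Set.Ioo x0 x1).indicator h) :=
    hint.integrable_indicator measurableSet_Ioo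
  have hdom : Integrable (fun s : Fin n → ℝ =>
      betaSigma x0 x1 σ * ∏ ν : Fin n, |(Set.Ioo x0 x1).indicator h (s ν)|) :=
    (Integrable.fin_nat_prod (𝕜 := ℝ) fun _ => hHi.abs).const_mul _
  refine Integrable.mono hdom.integrableOn
    ((measurable_integrand σ n hm).aestronglyMeasurable) ?_
  refine ae_restrict_of_forall_mem (measurableSet_simplexSet x0 x1 n) fun s hs => ?_
  have hb := norm_integrand_le hx σ n h hs
  have hnn : 0 ≤ betaSigma x0 x1 σ * ∏ ν : Fin n, |(Set.Ioo x0 x1).indicator h (s ν)| :=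
    mul_nonneg (betaSigma_pos x0 x1 σ).le (Finset.prod_nonneg fun ν _ => abs_nonneg _)
  calc ‖_‖ ≤ _ := hb
    _ ≤ _ := le_abs_self _


lemma abs_prod_sub_prod' {n : ℕ} (b c : Fin n → ℝ) :
    |∏ x, b x - ∏ x, c x| ≤
      ∑ x, (∏ y ∈ univ.filter (· < x), |c y|) * (|b x - c x| *
        ∏ y ∈ univ.filter (x < ·), |b y|) :=
  abs_prod_sub_prod Finset.univ b c

set_option maxHeartbeats 4000000 in
lemma integral_abs_prod_sub_prod_le {n : ℕ} {F G : ℝ → ℝ} (hFi : Integrable F)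
    (hGi : Integrable G) :
    ∫ s : Fin n → ℝ, |(∏ ν, G (s ν)) - ∏ ν, F (s ν)| ≤
      (n : ℝ) * ((∫ t, |G t - F t|) *
        (max (∫ t, |F t|) (∫ t, |G t|)) ^ (n - 1)) := by
  classical
  set A := ∫ t, |F t| with hAdef
  set B := ∫ t, |G t| with hBdef
  set Gm := ∫ t, |G t - F t| with hGmdef
  set M := max A B with hMdef
  have hA0 : 0 ≤ A := integral_nonneg fun t => abs_nonneg _
  have hB0 : 0 ≤ B := integral_nonneg fun t => abs_nonneg _
  have hGm0 : 0 ≤ Gm := integral_nonneg fun t => abs_nonneg _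
  have hΦint : Integrable (fun s : Fin n → ℝ => |(∏ ν, G (s ν)) - ∏ ν, F (s ν)|) :=
    ((Integrable.fin_nat_prod (𝕜 := ℝ) fun _ => hGi).sub
      (Integrable.fin_nat_prod (𝕜 := ℝ) fun _ => hFi)).abs
  have hHint : ∀ x y : Fin n, Integrable (fun t =>
      if y < x then |F t| else if x < y then |G t| else |G t - F t|) := by
    intro x y
    split_ifs
    · exact hFi.abs
    · exact hGi.abs
    · exact (hGi.sub hFi).abs
  have hsum_int : Integrable (fun s : Fin n → ℝ => ∑ x : Fin n, ∏ y : Fin n,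
      (if y < x then |F (s y)| else if x < y then |G (s y)| else |G (s y) - F (s y)|)) :=
    integrable_finset_sum _ fun x _ => Integrable.fin_nat_prod (𝕜 := ℝ) fun y => hHint x y
  have hptΦ : ∀ s : Fin n → ℝ, |(∏ ν, G (s ν)) - ∏ ν, F (s ν)| ≤ ∑ x : Fin n, ∏ y : Fin n,
      (if y < x then |F (s y)| else if x < y then |G (s y)| else |G (s y) - F (s y)|) := by
    intro s
    refine (abs_prod_sub_prod' (fun ν => G (s ν)) (fun ν => F (s ν))).trans
      (le_of_eq (Finset.sum_congr rfl fun x _ => ?_))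
    rw [prod_split x (fun y => if y < x then |F (s y)| else if x < y then |G (s y)|
      else |G (s y) - F (s y)|)]
    congr 1
    · exact Finset.prod_congr rfl fun y hy =>
        (if_pos (Finset.mem_filter.mp hy).2).symm
    congr 1
    · rw [if_neg (lt_irrefl x), if_neg (lt_irrefl x)]
    · refine Finset.prod_congr rfl fun y hy => ?_
      have hxy := (Finset.mem_filter.mp hy).2
      rw [if_neg (asymm hxy), if_pos hxy]
  calc ∫ s : Fin n → ℝ, |(∏ ν, G (s ν)) - ∏ ν, F (s ν)|
      ≤ ∫ s : Fin n → ℝ, ∑ x : Fin n, ∏ y : Fin n,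
        (if y < x then |F (s y)| else if x < y then |G (s y)| else |G (s y) - F (s y)|) :=
        integral_mono hΦint hsum_int hptΦ
    _ = ∑ x : Fin n, ∫ s : Fin n → ℝ, ∏ y : Fin n,
        (if y < x then |F (s y)| else if x < y then |G (s y)| else |G (s y) - F (s y)|) :=
        integral_finset_sum _ fun x _ => Integrable.fin_nat_prod (𝕜 := ℝ) fun y => hHint x y
    _ = ∑ x : Fin n, ∏ y : Fin n, ∫ t,
        (if y < x then |F t| else if x < y then |G t| else |G t - F t|) :=
        Finset.sum_congr rfl fun x _ => integral_fin_nat_prod_eq_prod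
          (fun y t => if y < x then |F t| else if x < y then |G t| else |G t - F t|)
    _ ≤ ∑ x : Fin n, Gm * M ^ (n - 1) := by
        refine Finset.sum_le_sum fun x _ => ?_
        rw [prod_split x (fun y => ∫ t,
          (if y < x then |F t| else if x < y then |G t| else |G t - F t|))]
        have h1 : ∏ y ∈ univ.filter (· < x), (∫ t,
            (if y < x then |F t| else if x < y then |G t| else |G t - F t|)) =
            A ^ (univ.filter (· < x)).card := by
          rw [← Finset.prod_const]
          refine Finset.prod_congr rfl fun y hy => ?_
          have := (Finset.mem_filter.mp hy).2
          simp only [if_pos this, hAdef]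
        have h2 : (∫ t, (if x < x then |F t| else if x < x then |G t| else |G t - F t|)) = Gm := by
          simp only [if_neg (lt_irrefl x), hGmdef]
        have h3 : ∏ y ∈ univ.filter (x < ·), (∫ t,
            (if y < x then |F t| else if x < y then |G t| else |G t - F t|)) =
            B ^ (univ.filter (x < ·)).card := by
          rw [← Finset.prod_const]
          refine Finset.prod_congr rfl fun y hy => ?_
          have hxy := (Finset.mem_filter.mp hy).2
          simp only [if_neg (asymm hxy), if_pos hxy, hBdef]
        rw [h1, h2, h3]
        have hcards := card_split x
        have hABM : A ^ (univ.filter (· < x)).card * B ^ (univ.filter (x < ·)).card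
            ≤ M ^ (n - 1) := by
          calc A ^ (univ.filter (· < x)).card * B ^ (univ.filter (x < ·)).card
              ≤ M ^ (univ.filter (· < x)).card * M ^ (univ.filter (x < ·)).card :=
                mul_le_mul (pow_le_pow_left₀ hA0 (le_max_left A B) _)
                  (pow_le_pow_left₀ hB0 (le_max_right A B) _) (by positivity) (by positivity)
            _ = M ^ ((univ.filter (· < x)).card + (univ.filter (x < ·)).card) := by
                rw [← pow_add]
            _ = M ^ (n - 1) := by congr 1; omega
        calc A ^ (univ.filter (· < x)).card * (Gm * B ^ (univ.filter (x < ·)).card)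
            = Gm * (A ^ (univ.filter (· < x)).card * B ^ (univ.filter (x < ·)).card) := by ring
          _ ≤ Gm * M ^ (n - 1) := mul_le_mul_of_nonneg_left hABM hGm0
    _ = (n : ℝ) * (Gm * M ^ (n - 1)) := by
        rw [Finset.sum_const, Finset.card_univ, Fintype.card_fin, nsmul_eq_mul]

lemma indicator_sub_eq {x0 x1 : ℝ} (f g : ℝ → ℝ) :
    (fun t => (Set.Ioo x0 x1).indicator g t - (Set.Ioo x0 x1).indicator f t)
      = (Set.Ioo x0 x1).indicator (fun t => g t - f t) :=
  funext fun t => by by_cases ht : t ∈ Set.Ioo x0 x1 <;> simp [ht]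

set_option maxHeartbeats 1000000 in
lemma Cterm_sub_norm_le {x0 x1 : ℝ} (hx : x0 < x1) {f g : ℝ → ℝ}
    (hfm : Measurable f) (hgm : Measurable g)
    (hf : IntegrableOn f (Set.Ioo x0 x1)) (hg : IntegrableOn g (Set.Ioo x0 x1))
    (σ : ℂ) (n : ℕ) :
    ‖Cterm x0 x1 g n σ - Cterm x0 x1 f n σ‖ ≤
      betaSigma x0 x1 σ * ((n : ℝ) * L1normOn x0 x1 (fun t => g t - f t) *
        max (L1normOn x0 x1 f) (L1normOn x0 x1 g) ^ (n - 1)) / n.factorial := by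
  classical
  have hβ : 0 < betaSigma x0 x1 σ := betaSigma_pos x0 x1 σ
  have hS : MeasurableSet (simplexSet x0 x1 n) := measurableSet_simplexSet x0 x1 n
  set F := (Set.Ioo x0 x1).indicator f with hFdef
  set G := (Set.Ioo x0 x1).indicator g with hGdef
  have hFi : Integrable F := hf.integrable_indicator measurableSet_Ioo
  have hGi : Integrable G := hg.integrable_indicator measurableSet_Ioo
  have hΦint : Integrable (fun s : Fin n → ℝ => |(∏ ν, G (s ν)) - ∏ ν, F (s ν)|) :=
    ((Integrable.fin_nat_prod (𝕜 := ℝ) fun _ => hGi).sub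
      (Integrable.fin_nat_prod (𝕜 := ℝ) fun _ => hFi)).abs
  have hΦsym : ∀ (π : Equiv.Perm (Fin n)) (s : Fin n → ℝ),
      (fun s : Fin n → ℝ => |(∏ ν, G (s ν)) - ∏ ν, F (s ν)|) (s ∘ π)
        = |(∏ ν, G (s ν)) - ∏ ν, F (s ν)| := by
    intro π s
    simp only [Function.comp_apply]
    rw [Equiv.prod_comp π (fun ν => G (s ν)), Equiv.prod_comp π (fun ν => F (s ν))]
  have hIfint := integrand_integrableOn hx σ n hfm hf
  have hIgint := integrand_integrableOn hx σ n hgm hg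
  have hdiff : Cterm x0 x1 g n σ - Cterm x0 x1 f n σ
      = ∫ s in simplexSet x0 x1 n,
          (Complex.exp (2 * Complex.I * σ * (kappaFn x0 n s : ℂ)) * ∏ ν : Fin n, (g (s ν) : ℂ)
           - Complex.exp (2 * Complex.I * σ * (kappaFn x0 n s : ℂ))
              * ∏ ν : Fin n, (f (s ν) : ℂ)) := by
    rw [Cterm, Cterm, ← integral_sub hIgint hIfint]
  have hpt : ∀ s ∈ simplexSet x0 x1 n,
      ‖Complex.exp (2 * Complex.I * σ * (kappaFn x0 n s : ℂ)) * ∏ ν : Fin n, (g (s ν) : ℂ)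
        - Complex.exp (2 * Complex.I * σ * (kappaFn x0 n s : ℂ)) * ∏ ν : Fin n, (f (s ν) : ℂ)‖
      ≤ betaSigma x0 x1 σ * |(∏ ν, G (s ν)) - ∏ ν, F (s ν)| := by
    intro s hs
    have h1 : Complex.exp (2 * Complex.I * σ * (kappaFn x0 n s : ℂ))
          * ∏ ν : Fin n, (g (s ν) : ℂ)
        - Complex.exp (2 * Complex.I * σ * (kappaFn x0 n s : ℂ))
          * ∏ ν : Fin n, (f (s ν) : ℂ)
        = Complex.exp (2 * Complex.I * σ * (kappaFn x0 n s : ℂ)) *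
        (((∏ ν : Fin n, G (s ν) : ℝ) : ℂ) - ((∏ ν : Fin n, F (s ν) : ℝ) : ℂ)) := by
      rw [Complex.ofReal_prod, Complex.ofReal_prod]
      have hgG : ∀ ν : Fin n, ((g (s ν) : ℂ)) = ((G (s ν) : ℝ) : ℂ) := fun ν => by
        rw [hGdef, Set.indicator_of_mem (hs.2 ν)]
      have hfF : ∀ ν : Fin n, ((f (s ν) : ℂ)) = ((F (s ν) : ℝ) : ℂ) := fun ν => by
        rw [hFdef, Set.indicator_of_mem (hs.2 ν)]
      rw [Finset.prod_congr rfl fun ν _ => hgG ν, Finset.prod_congr rfl fun ν _ => hfF ν]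
      ring
    rw [h1, norm_mul, ← Complex.ofReal_sub, Complex.norm_real, Real.norm_eq_abs]
    exact mul_le_mul_of_nonneg_right (norm_exp_kappa_le hx σ hs) (abs_nonneg _)
  have hstep3 : ‖Cterm x0 x1 g n σ - Cterm x0 x1 f n σ‖
      ≤ betaSigma x0 x1 σ * ∫ s in simplexSet x0 x1 n, |(∏ ν, G (s ν)) - ∏ ν, F (s ν)| := by
    rw [hdiff]
    calc ‖∫ s in simplexSet x0 x1 n, _‖ ≤ _ := norm_integral_le_integral_norm _
      _ ≤ ∫ s in simplexSet x0 x1 n,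
            betaSigma x0 x1 σ * |(∏ ν, G (s ν)) - ∏ ν, F (s ν)| := by
          refine setIntegral_mono_on ((hIgint.sub hIfint).norm) ?_ hS hpt
          exact ((hΦint.const_mul _).integrableOn)
      _ = betaSigma x0 x1 σ * ∫ s in simplexSet x0 x1 n,
            |(∏ ν, G (s ν)) - ∏ ν, F (s ν)| := by rw [integral_const_mul]
  have hsymm := factorial_mul_setIntegral_simplex_le (x0 := x0) (x1 := x1) n hΦint
    (fun s => abs_nonneg _) hΦsym
  have hΦle := integral_abs_prod_sub_prod_le (n := n) hFi hGi
  have hSint_nn : 0 ≤ ∫ s in simplexSet x0 x1 n, |(∏ ν, G (s ν)) - ∏ ν, F (s ν)| :=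
    setIntegral_nonneg hS fun s _ => abs_nonneg _
  have hfac : (0 : ℝ) < n.factorial := by positivity
  have hSle : (∫ s in simplexSet x0 x1 n, |(∏ ν, G (s ν)) - ∏ ν, F (s ν)|)
      ≤ ((n : ℝ) * ((∫ t, |G t - F t|) * (max (∫ t, |F t|) (∫ t, |G t|)) ^ (n - 1)))
        / n.factorial := by
    rw [le_div_iff₀ hfac]
    calc (∫ s in simplexSet x0 x1 n, |(∏ ν, G (s ν)) - ∏ ν, F (s ν)|) * n.factorial
        = (n.factorial : ℝ) * ∫ s in simplexSet x0 x1 n,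
            |(∏ ν, G (s ν)) - ∏ ν, F (s ν)| := by ring
      _ ≤ ∫ s : Fin n → ℝ, |(∏ ν, G (s ν)) - ∏ ν, F (s ν)| := hsymm
      _ ≤ (n : ℝ) * ((∫ t, |G t - F t|) * (max (∫ t, |F t|) (∫ t, |G t|)) ^ (n - 1)) := hΦle
  have hA : (∫ t, |F t|) = L1normOn x0 x1 f := integral_abs_indicator f
  have hB : (∫ t, |G t|) = L1normOn x0 x1 g := integral_abs_indicator g
  have hGmL : (∫ t, |G t - F t|) = L1normOn x0 x1 (fun t => g t - f t) := by
    rw [← integral_abs_indicator (fun t => g t - f t), ← indicator_sub_eq f g]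
  calc ‖Cterm x0 x1 g n σ - Cterm x0 x1 f n σ‖
      ≤ betaSigma x0 x1 σ * ∫ s in simplexSet x0 x1 n,
          |(∏ ν, G (s ν)) - ∏ ν, F (s ν)| := hstep3
    _ ≤ betaSigma x0 x1 σ * (((n : ℝ) * ((∫ t, |G t - F t|) *
          (max (∫ t, |F t|) (∫ t, |G t|)) ^ (n - 1))) / n.factorial) :=
        mul_le_mul_of_nonneg_left hSle hβ.le
    _ = betaSigma x0 x1 σ * ((n : ℝ) * L1normOn x0 x1 (fun t => g t - f t) *
          max (L1normOn x0 x1 f) (L1normOn x0 x1 g) ^ (n - 1)) / n.factorial := by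
        rw [hA, hB, hGmL]; ring


lemma L1normOn_nonneg (x0 x1 : ℝ) (f : ℝ → ℝ) : 0 ≤ L1normOn x0 x1 f :=
  setIntegral_nonneg measurableSet_Ioo fun _ _ => abs_nonneg _

lemma L1normOn_congr {x0 x1 : ℝ} {f f' : ℝ → ℝ}
    (h : f =ᵐ[volume.restrict (Set.Ioo x0 x1)] f') :
    L1normOn x0 x1 f = L1normOn x0 x1 f' :=
  integral_congr_ae (h.mono fun x hx => by dsimp only; rw [hx])

lemma Cterm_congr {x0 x1 : ℝ} {f g : ℝ → ℝ}
    (h : f =ᵐ[volume.restrict (Set.Ioo x0 x1)] g) (n : ℕ) (σ : ℂ) :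
    Cterm x0 x1 f n σ = Cterm x0 x1 g n σ := by
  classical
  have hN0 : volume.restrict (Set.Ioo x0 x1) {x | f x ≠ g x} = 0 := ae_iff.mp h
  set N := toMeasurable (volume.restrict (Set.Ioo x0 x1)) {x | f x ≠ g x} with hNdef
  have hNnull : volume.restrict (Set.Ioo x0 x1) N = 0 := by
    rw [hNdef, measure_toMeasurable]; exact hN0
  have hNIoo : volume (N ∩ Set.Ioo x0 x1) = 0 := by
    rw [← Measure.restrict_apply (measurableSet_toMeasurable _ _)]
    exact hNnull
  have hB : volume (⋃ ν : Fin n, Function.eval ν ⁻¹' (N ∩ Set.Ioo x0 x1)) = 0 := by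
    refine measure_iUnion_null fun ν => ?_
    rw [volume_pi]
    exact Measure.pi_eval_preimage_null _ hNIoo
  refine setIntegral_congr_ae (measurableSet_simplexSet x0 x1 n) ?_
  have hae : ∀ᵐ s : Fin n → ℝ, s ∉ ⋃ ν : Fin n, Function.eval ν ⁻¹' (N ∩ Set.Ioo x0 x1) := by
    rw [ae_iff]
    have heq : {s : Fin n → ℝ | ¬ s ∉ ⋃ ν : Fin n, Function.eval ν ⁻¹' (N ∩ Set.Ioo x0 x1)}
        = ⋃ ν : Fin n, Function.eval ν ⁻¹' (N ∩ Set.Ioo x0 x1) := by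
      ext s; simp
    rw [heq]
    exact hB
  filter_upwards [hae] with s hsB hs
  congr 1
  refine Finset.prod_congr rfl fun ν _ => ?_
  have h1 : s ν ∉ N ∩ Set.Ioo x0 x1 := by
    intro hmem
    exact hsB (Set.mem_iUnion.mpr ⟨ν, hmem⟩)
  have h2 : s ν ∈ Set.Ioo x0 x1 := hs.2 ν
  have h3 : s ν ∉ N := fun hN => h1 ⟨hN, h2⟩
  have h4 : s ν ∉ {x | f x ≠ g x} := fun hx => h3 (subset_toMeasurable _ _ hx)
  simp only [Set.mem_setOf_eq, not_not] at h4
  rw [h4]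

lemma Cterm_zero_fun {x0 x1 : ℝ} (n : ℕ) (σ : ℂ) :
    Cterm x0 x1 (fun _ => 0) (n + 1) σ = 0 := by
  rw [Cterm]
  have : ∀ s : Fin (n+1) → ℝ,
      Complex.exp (2 * Complex.I * σ * (kappaFn x0 (n+1) s : ℂ)) *
        ∏ ν : Fin (n+1), (((fun _ : ℝ => (0:ℝ)) (s ν) : ℝ) : ℂ) = 0 := by
    intro s
    rw [Finset.prod_eq_zero (Finset.mem_univ (0 : Fin (n+1))) (by norm_num), mul_zero]
  simp only [this, integral_zero]

lemma Cterm_norm_le {x0 x1 : ℝ} (hx : x0 < x1) {f : ℝ → ℝ} (hfm : Measurable f)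
    (hf : IntegrableOn f (Set.Ioo x0 x1)) (σ : ℂ) (n : ℕ) :
    ‖Cterm x0 x1 f (n + 1) σ‖ ≤
      betaSigma x0 x1 σ * L1normOn x0 x1 f * L1normOn x0 x1 f ^ n / n.factorial := by
  have h0 := Cterm_sub_norm_le hx (f := fun _ => (0:ℝ)) (g := f) measurable_const hfm
    (integrableOn_const measure_Ioo_lt_top.ne) hf σ (n+1)
  rw [Cterm_zero_fun n σ, sub_zero] at h0
  have hL0 : L1normOn x0 x1 (fun _ : ℝ => (0:ℝ)) = 0 := by
    simp [L1normOn]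
  have hLsub : L1normOn x0 x1 (fun t => f t - (fun _ : ℝ => (0:ℝ)) t) = L1normOn x0 x1 f := by
    simp [L1normOn]
  rw [hL0, hLsub] at h0
  have hmax : max (0:ℝ) (L1normOn x0 x1 f) = L1normOn x0 x1 f :=
    max_eq_right (L1normOn_nonneg x0 x1 f)
  rw [hmax] at h0
  rw [show (n + 1 - 1 : ℕ) = n from by omega] at h0
  refine h0.trans (le_of_eq ?_)
  have hfa : ((n+1).factorial : ℝ) = ((n:ℝ)+1) * n.factorial := by
    rw [Nat.factorial_succ]; push_cast; ring
  rw [hfa]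
  push_cast
  have h1 : (n.factorial : ℝ) ≠ 0 := by positivity
  have h2 : ((n:ℝ) + 1) ≠ 0 := by positivity
  field_simp

lemma hexp_lipschitz_meas {x0 x1 : ℝ} (hx : x0 < x1) {f g : ℝ → ℝ}
    (hfm : Measurable f) (hgm : Measurable g)
    (hf : IntegrableOn f (Set.Ioo x0 x1)) (hg : IntegrableOn g (Set.Ioo x0 x1)) (σ : ℂ) :
    ‖hexp x0 x1 g σ - hexp x0 x1 f σ‖ ≤
      betaSigma x0 x1 σ * L1normOn x0 x1 (fun t => g t - f t) *
        Real.exp (max (L1normOn x0 x1 f) (L1normOn x0 x1 g)) := by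
  classical
  set β := betaSigma x0 x1 σ with hβdef
  have hβ : 0 < β := betaSigma_pos x0 x1 σ
  set Gm := L1normOn x0 x1 (fun t => g t - f t) with hGmdef
  set M := max (L1normOn x0 x1 f) (L1normOn x0 x1 g) with hMdef
  have hGm0 : 0 ≤ Gm := L1normOn_nonneg _ _ _
  have hM0 : 0 ≤ M := le_trans (L1normOn_nonneg x0 x1 f) (le_max_left _ _)
  -- difference bound
  have hdle : ∀ j : ℕ, ‖Cterm x0 x1 g (j+1) σ - Cterm x0 x1 f (j+1) σ‖
      ≤ β * Gm * M ^ j / j.factorial := by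
    intro j
    have h0 := Cterm_sub_norm_le hx hfm hgm hf hg σ (j+1)
    rw [show (j + 1 - 1 : ℕ) = j from by omega] at h0
    refine h0.trans (le_of_eq ?_)
    have hfa : ((j+1).factorial : ℝ) = (j+1) * j.factorial := by
      rw [Nat.factorial_succ]; push_cast; ring
    rw [hfa, ← hGmdef, ← hMdef, ← hβdef]
    have hjf : (j.factorial : ℝ) ≠ 0 := by positivity
    field_simp
    push_cast
    ring
  -- summability
  have hsummand : Summable (fun j : ℕ => β * Gm * M ^ j / j.factorial) := by
    have := (Real.summable_pow_div_factorial M).mul_left (β * Gm)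
    simpa [mul_div_assoc] using this
  have hsummandf : Summable (fun j : ℕ =>
      β * L1normOn x0 x1 f * L1normOn x0 x1 f ^ j / j.factorial) := by
    have := (Real.summable_pow_div_factorial (L1normOn x0 x1 f)).mul_left (β * L1normOn x0 x1 f)
    simpa [mul_div_assoc] using this
  have hsummandg : Summable (fun j : ℕ =>
      β * L1normOn x0 x1 g * L1normOn x0 x1 g ^ j / j.factorial) := by
    have := (Real.summable_pow_div_factorial (L1normOn x0 x1 g)).mul_left (β * L1normOn x0 x1 g)
    simpa [mul_div_assoc] using this
  have hCf : Summable (fun j : ℕ => Cterm x0 x1 f (j+1) σ) :=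
    Summable.of_norm_bounded hsummandf fun j => Cterm_norm_le hx hfm hf σ j
  have hCg : Summable (fun j : ℕ => Cterm x0 x1 g (j+1) σ) :=
    Summable.of_norm_bounded hsummandg fun j => Cterm_norm_le hx hgm hg σ j
  have hdiff : hexp x0 x1 g σ - hexp x0 x1 f σ
      = ∑' j : ℕ, (Cterm x0 x1 g (j+1) σ - Cterm x0 x1 f (j+1) σ) := by
    rw [hexp, hexp, hCg.tsum_sub hCf]
    ring
  rw [hdiff]
  have h1 : ‖∑' j : ℕ, (Cterm x0 x1 g (j+1) σ - Cterm x0 x1 f (j+1) σ)‖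
      ≤ ∑' j : ℕ, β * Gm * M ^ j / j.factorial :=
    tsum_of_norm_bounded hsummand.hasSum hdle
  refine h1.trans (le_of_eq ?_)
  have h2 : ∑' j : ℕ, β * Gm * M ^ j / j.factorial
      = (β * Gm) * ∑' j : ℕ, M ^ j / j.factorial := by
    rw [← tsum_mul_left]
    refine tsum_congr fun j => ?_
    ring
  rw [h2]
  have h3 : Real.exp M = ∑' j : ℕ, M ^ j / j.factorial := by
    rw [Real.exp_eq_exp_ℝ, NormedSpace.exp_eq_tsum_div]
  rw [← h3]

end HexpAux


theorem hexp_lipschitz (x0 x1 : ℝ) (hx : x0 < x1) (α αt : ℝ → ℝ)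
    (hα : IntegrableOn α (Set.Ioo x0 x1)) (hαt : IntegrableOn αt (Set.Ioo x0 x1))
    (σ : ℂ) :
    ‖hexp x0 x1 αt σ - hexp x0 x1 α σ‖ ≤
      betaSigma x0 x1 σ * L1normOn x0 x1 (fun t => αt t - α t) *
        Real.exp (max (L1normOn x0 x1 α) (L1normOn x0 x1 αt)) := by
  have hαm : AEStronglyMeasurable α (volume.restrict (Set.Ioo x0 x1)) := hα.aestronglyMeasurable
  have hαtm : AEStronglyMeasurable αt (volume.restrict (Set.Ioo x0 x1)) :=
    hαt.aestronglyMeasurable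
  set f := hαm.mk α with hfdef
  set g := hαtm.mk αt with hgdef
  have hfm : Measurable f := hαm.stronglyMeasurable_mk.measurable
  have hgm : Measurable g := hαtm.stronglyMeasurable_mk.measurable
  have hff : α =ᵐ[volume.restrict (Set.Ioo x0 x1)] f := hαm.ae_eq_mk
  have hgg : αt =ᵐ[volume.restrict (Set.Ioo x0 x1)] g := hαtm.ae_eq_mk
  have hf : IntegrableOn f (Set.Ioo x0 x1) := hα.congr hff
  have hg : IntegrableOn g (Set.Ioo x0 x1) := hαt.congr hgg
  have e1 : hexp x0 x1 α σ = hexp x0 x1 f σ := by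
    rw [hexp, hexp]
    congr 1
    exact tsum_congr fun j => Cterm_congr hff (j+1) σ
  have e2 : hexp x0 x1 αt σ = hexp x0 x1 g σ := by
    rw [hexp, hexp]
    congr 1
    exact tsum_congr fun j => Cterm_congr hgg (j+1) σ
  have e3 : L1normOn x0 x1 α = L1normOn x0 x1 f := L1normOn_congr hff
  have e4 : L1normOn x0 x1 αt = L1normOn x0 x1 g := L1normOn_congr hgg
  have e5 : L1normOn x0 x1 (fun t => αt t - α t) = L1normOn x0 x1 (fun t => g t - f t) :=
    L1normOn_congr (hgg.sub hff)
  rw [e1, e2, e3, e4, e5]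
  exact hexp_lipschitz_meas hx hfm hgm hf hg σ
end

section
/- With notation as in the OPUC matrix product, for |z| = 1 one has Re( Ψ*_{n,n}(z) · conj(Φ*_{n,n}(z)) ) = ∏_{j=1}^n (1 − r_{n,j}²), and consequently |Ψ*_{n,n}(z) + Φ*_{n,n}(z)|² ≥ 2∏_{j=1}^n (1 − r_{n,j}²) on the unit circle. -/
open Polynomial

noncomputable def cmat (z : ℂ) (c : ℝ) : Matrix (Fin 2) (Fin 2) ℂ :=
  !![z, (c : ℂ) * z; (c : ℂ), 1]

lemma key (z : ℂ) (hz : z * (starRingEnd ℂ) z = 1) (l : List ℝ) :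
    (fun A : Matrix (Fin 2) (Fin 2) ℂ =>
      A 0 0 = z ^ l.length * (starRingEnd ℂ) (A 0 1) ∧
      A 1 0 = -(z ^ l.length * (starRingEnd ℂ) (A 1 1)) ∧
      A.det = 2 * z ^ l.length * (l.map fun c : ℝ => ((1 - c ^ 2 : ℝ) : ℂ)).prod)
    ((!![1, 1; -1, 1] : Matrix (Fin 2) (Fin 2) ℂ) * (l.map (cmat z)).prod) := by
  induction l using List.reverseRecOn with
  | nil =>
      refine ⟨?_, ?_, ?_⟩ <;> simp [Matrix.det_fin_two]
      · ring
  | append_singleton l c ih =>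
      obtain ⟨h1, h2, h3⟩ := ih
      set A := (!![1, 1; -1, 1] : Matrix (Fin 2) (Fin 2) ℂ) * (l.map (cmat z)).prod with hA
      have hconcat : (!![1, 1; -1, 1] : Matrix (Fin 2) (Fin 2) ℂ) *
          ((l ++ [c]).map (cmat z)).prod = A * cmat z c := by
        simp [hA, Matrix.mul_assoc]
      rw [hconcat]
      have e00 : (A * cmat z c) 0 0 = A 0 0 * z + A 0 1 * (c:ℂ) := by
        simp [cmat, Matrix.mul_apply, Fin.sum_univ_two]
      have e01 : (A * cmat z c) 0 1 = A 0 0 * ((c:ℂ) * z) + A 0 1 := by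
        simp [cmat, Matrix.mul_apply, Fin.sum_univ_two]
      have e10 : (A * cmat z c) 1 0 = A 1 0 * z + A 1 1 * (c:ℂ) := by
        simp [cmat, Matrix.mul_apply, Fin.sum_univ_two]
      have e11 : (A * cmat z c) 1 1 = A 1 0 * ((c:ℂ) * z) + A 1 1 := by
        simp [cmat, Matrix.mul_apply, Fin.sum_univ_two]
      have hlen : (l ++ [c]).length = l.length + 1 := by simp
      have hz' : z ^ (l.length + 1) * (starRingEnd ℂ) z ^ (l.length + 1) = 1 := by
        rw [← mul_pow, hz, one_pow]
      have h1' : (starRingEnd ℂ) (A 0 0) = (starRingEnd ℂ) z ^ l.length * A 0 1 := by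
        rw [h1]; simp
      have h2' : (starRingEnd ℂ) (A 1 0) = -((starRingEnd ℂ) z ^ l.length * A 1 1) := by
        rw [h2]; simp
      refine ⟨?_, ?_, ?_⟩
      · rw [e00, e01, hlen, map_add, map_mul, map_mul,
          Complex.conj_ofReal, h1', h1]
        linear_combination (-((c:ℂ) * A 0 1)) * hz'
      · rw [e10, e11, hlen, map_add, map_mul, map_mul,
          Complex.conj_ofReal, h2', h2]
        linear_combination (-((c:ℂ) * A 1 1)) * hz'
      · rw [Matrix.det_mul, h3, hlen]
        have hd : (cmat z c).det = z * (1 - (c:ℂ)^2) := by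
          simp [cmat, Matrix.det_fin_two]; ring
        rw [hd, List.map_append, List.prod_append]
        push_cast
        simp
        ring

/-- The transfer matrix M_{n,k}(z) = [[z, z r],[r, 1]] with recursion coefficient r. -/
noncomputable def opucStep (c : ℝ) : Matrix (Fin 2) (Fin 2) (Polynomial ℂ) :=
  !![Polynomial.X, Polynomial.C (c : ℂ) * Polynomial.X; Polynomial.C (c : ℂ), 1]

/-- The ordered product M₀ M_{n,1} ⋯ M_{n,j}, with M₀ = [[1,1],[−1,1]]. -/
noncomputable def opucProd (n : ℕ) (r : Fin n → ℝ) (j : ℕ) (hj : j ≤ n) :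
    Matrix (Fin 2) (Fin 2) (Polynomial ℂ) :=
  (!![1, 1; -1, 1] : Matrix (Fin 2) (Fin 2) (Polynomial ℂ)) *
    (List.ofFn (fun k : Fin j => opucStep (r (Fin.castLE hj k)))).prod

lemma bridge (n : ℕ) (r : Fin n → ℝ) (z : ℂ) :
    (opucProd n r n le_rfl).map (Polynomial.eval z) =
      (!![1, 1; -1, 1] : Matrix (Fin 2) (Fin 2) ℂ) * ((List.ofFn r).map (cmat z)).prod := by
  have hmap : ∀ M : Matrix (Fin 2) (Fin 2) (Polynomial ℂ),
      M.map (Polynomial.eval z) = (Polynomial.evalRingHom z).mapMatrix M := fun _ => rfl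
  rw [hmap, opucProd, map_mul, map_list_prod]
  congr 1
  · ext i j; fin_cases i <;> fin_cases j <;> simp
  · rw [List.map_ofFn, List.map_ofFn]
    apply congrArg List.prod
    apply congrArg List.ofFn
    funext k
    ext i j
    fin_cases i <;> fin_cases j <;>
      simp [opucStep, cmat, Fin.castLE]

/-- Φ_{n,j}: the (monic) orthogonal polynomial. -/
noncomputable def PhiP (n : ℕ) (r : Fin n → ℝ) (j : ℕ) (hj : j ≤ n) : Polynomial ℂ :=
  -((opucProd n r j hj) 1 0)

/-- Φ*_{n,j}: the dual polynomial. -/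
noncomputable def PhiStarP (n : ℕ) (r : Fin n → ℝ) (j : ℕ) (hj : j ≤ n) : Polynomial ℂ :=
  (opucProd n r j hj) 1 1

/-- Ψ_{n,j}: second-kind polynomial. -/
noncomputable def PsiP (n : ℕ) (r : Fin n → ℝ) (j : ℕ) (hj : j ≤ n) : Polynomial ℂ :=
  (opucProd n r j hj) 0 0

/-- Ψ*_{n,j}: dual second-kind polynomial. -/
noncomputable def PsiStarP (n : ℕ) (r : Fin n → ℝ) (j : ℕ) (hj : j ≤ n) : Polynomial ℂ :=
  (opucProd n r j hj) 0 1

theorem opuc_real_part_product (n : ℕ) (r : Fin n → ℝ) (hr : ∀ k, |r k| < 1) :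
    ∀ z : ℂ, ‖z‖ = 1 →
      (((PsiStarP n r n le_rfl).eval z * (starRingEnd ℂ) ((PhiStarP n r n le_rfl).eval z)).re =
        (∏ k : Fin n, (1 - (r k) ^ 2))) ∧
      2 * (∏ k : Fin n, (1 - (r k) ^ 2)) ≤
        ‖(PsiStarP n r n le_rfl).eval z + (PhiStarP n r n le_rfl).eval z‖ ^ 2 := by
  intro z hz
  have hz0 : z ≠ 0 := by
    intro h; rw [h] at hz; simp at hz
  have hz1 : z * (starRingEnd ℂ) z = 1 := by
    rw [Complex.mul_conj]
    norm_cast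
    rw [← Complex.sq_norm, hz]; norm_num
  obtain ⟨h1, h2, h3⟩ := key z hz1 (List.ofFn r)
  rw [← bridge n r z] at h1 h2 h3
  simp only [List.length_ofFn] at h1 h2 h3
  set B := (opucProd n r n le_rfl).map (Polynomial.eval z) with hB
  set a : ℂ := (PsiStarP n r n le_rfl).eval z with ha
  set b : ℂ := (PhiStarP n r n le_rfl).eval z with hb
  have hBa : B 0 1 = a := rfl
  have hBb : B 1 1 = b := rfl
  -- the complex product value
  have hP : ((List.ofFn r).map fun c : ℝ => ((1 - c ^ 2 : ℝ) : ℂ)).prod =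
      ((∏ k : Fin n, (1 - (r k) ^ 2) : ℝ) : ℂ) := by
    rw [List.map_ofFn, List.prod_ofFn]
    push_cast
    rfl
  rw [hP] at h3
  set Q : ℝ := ∏ k : Fin n, (1 - (r k) ^ 2) with hQ
  have hdet : B 0 0 * B 1 1 - B 0 1 * B 1 0 = 2 * z ^ n * (Q : ℂ) := by
    rw [← Matrix.det_fin_two]; exact h3
  rw [h1, h2, hBa, hBb] at hdet
  have e : z ^ n * (a * (starRingEnd ℂ) b + (starRingEnd ℂ) (a * (starRingEnd ℂ) b)) =
      z ^ n * (2 * (Q : ℂ)) := by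
    simp only [map_mul, Complex.conj_conj]
    linear_combination hdet
  have e2 : a * (starRingEnd ℂ) b + (starRingEnd ℂ) (a * (starRingEnd ℂ) b) =
      2 * (Q : ℂ) := mul_left_cancel₀ (pow_ne_zero n hz0) e
  rw [Complex.add_conj] at e2
  have e3 : 2 * (a * (starRingEnd ℂ) b).re = 2 * Q := by
    have := e2
    push_cast at this
    exact Complex.ofReal_injective (by push_cast; linear_combination this)
  have hre : (a * (starRingEnd ℂ) b).re = Q := by linarith
  refine ⟨hre, ?_⟩
  have hnorm : ‖a + b‖ ^ 2 = Complex.normSq (a + b) := by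
    rw [← Complex.sq_norm]
  rw [hnorm, Complex.normSq_add]
  have h4 := Complex.normSq_nonneg a
  have h5 := Complex.normSq_nonneg b
  linarith [hre]
end
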